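/- Let d ≥ 1, r > 0, 0 < ϱ ≤ 1 with 2ϱ < r, K ≥ 0 and M > 0. If c : ℤ^d → ℂ satisfies |c_k| ≤ M e^{−|k| r} for all k ∈ ℤ^d, then the truncation tail satisfies Σ_{k : |k| > K} |c_k| e^{|k|(r−2ϱ)} ≤ ((2+2e)/ϱ)^d · e^{−Kϱ} · M. -/

import Mathlib

/-- The ℓ¹ norm of a multi-index `k : Fin d → ℤ`, as a real number. -/
noncomputable def l1norm {d : ℕ} (k : Fin d → ℤ) : ℝ := ∑ j, |(k j : ℝ)|

lemma pi_prod_summable_tsum {g : ℤ → ℝ} (hg : Summable g) (hg0 : ∀ n, 0 ≤ g n) (d : ℕ) :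
    Summable (fun k : Fin d → ℤ => ∏ j, g (k j)) ∧
    (∑' k : Fin d → ℤ, ∏ j, g (k j)) = (∑' n, g n) ^ d := by
  induction d with
  | zero =>
    have h1 : (fun k : Fin 0 → ℤ => ∏ j, g (k j)) = fun _ => (1:ℝ) := by
      funext k; simp
    rw [h1]
    constructor
    · exact .of_finite
    · rw [tsum_eq_single (fun i => i.elim0) (fun b hb =>
        absurd (Subsingleton.elim b _) hb)]
      simp
  | succ n ih =>
    have hprod : ∀ p : ℤ × (Fin n → ℤ),
        (∏ j, g ((Fin.consEquiv (fun _ => ℤ)) p j)) = g p.1 * ∏ j, g (p.2 j) := by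
      intro p
      simp [Fin.consEquiv, Fin.prod_univ_succ]
    have hs : Summable (fun p : ℤ × (Fin n → ℤ) => g p.1 * ∏ j, g (p.2 j)) :=
      Summable.mul_of_nonneg (f := g) (g := fun t : Fin n → ℤ => ∏ j, g (t j)) hg ih.1
        (fun k => hg0 _) (fun k => Finset.prod_nonneg fun j _ => hg0 _)
    have hsum : Summable (fun k : Fin (n+1) → ℤ => ∏ j, g (k j)) := by
      rw [← (Fin.consEquiv (fun _ => ℤ)).summable_iff]
      refine hs.congr fun p => ?_
      exact (hprod p).symm
    refine ⟨hsum, ?_⟩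
    rw [← (Fin.consEquiv (fun _ => ℤ)).tsum_eq]
    calc (∑' p : ℤ × (Fin n → ℤ), ∏ j, g ((Fin.consEquiv (fun _ => ℤ)) p j))
        = ∑' p : ℤ × (Fin n → ℤ), g p.1 * ∏ j, g (p.2 j) := tsum_congr hprod
      _ = ∑' a : ℤ, ∑' t : Fin n → ℤ, g a * ∏ j, g (t j) :=
          Summable.tsum_prod' hs (fun b => (ih.1.mul_left (g b)))
      _ = (∑' a, g a) * ∑' t : Fin n → ℤ, ∏ j, g (t j) := by
          simp_rw [tsum_mul_left]; rw [tsum_mul_right]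
      _ = (∑' m, g m) ^ (n+1) := by rw [ih.2, pow_succ]; ring

lemma one_sub_exp_neg_ge (ϱ : ℝ) (h0 : 0 < ϱ) (h1 : ϱ ≤ 1) :
    ϱ / Real.exp 1 ≤ 1 - Real.exp (-ϱ) := by
  have h2 : ϱ * Real.exp (-ϱ) ≤ 1 - Real.exp (-ϱ) := by
    have := Real.add_one_le_exp ϱ
    have hx : 0 < Real.exp (-ϱ) := Real.exp_pos _
    nlinarith [Real.exp_neg ϱ, Real.exp_pos ϱ, mul_pos (Real.exp_pos ϱ) hx,
      Real.exp_neg ϱ ▸ (inv_mul_cancel₀ (ne_of_gt (Real.exp_pos ϱ)))]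
  have h3 : Real.exp (-1) ≤ Real.exp (-ϱ) := Real.exp_le_exp.mpr (by linarith)
  have h4 : ϱ / Real.exp 1 = ϱ * Real.exp (-1) := by
    rw [Real.exp_neg]; ring
  rw [h4]
  have : ϱ * Real.exp (-1) ≤ ϱ * Real.exp (-ϱ) := by
    exact mul_le_mul_of_nonneg_left h3 (le_of_lt h0)
  linarith

lemma int_exp_summable_tsum (ϱ : ℝ) (h0 : 0 < ϱ) (h1 : ϱ ≤ 1) :
    Summable (fun n : ℤ => Real.exp (-(ϱ * |(n : ℝ)|))) ∧
    (∑' n : ℤ, Real.exp (-(ϱ * |(n : ℝ)|))) ≤ (2 + 2 * Real.exp 1) / ϱ := by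
  set x := Real.exp (-ϱ) with hxdef
  have hx0 : 0 < x := Real.exp_pos _
  have hx1 : x < 1 := by
    rw [hxdef, Real.exp_lt_one_iff]; linarith
  have hfx : ∀ n : ℤ, Real.exp (-(ϱ * |(n : ℝ)|)) = x ^ n.natAbs := by
    intro n
    rw [hxdef, ← Real.exp_nat_mul]
    congr 1
    rw [Nat.cast_natAbs]
    push_cast
    ring
  have hnat : HasSum (fun n : ℕ => x ^ (n : ℤ).natAbs) (1 - x)⁻¹ := by
    have := hasSum_geometric_of_lt_one hx0.le hx1
    simpa using this
  have hneg : HasSum (fun n : ℕ => x ^ (-(n + 1) : ℤ).natAbs) (x * (1 - x)⁻¹) := by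
    have h := (hasSum_geometric_of_lt_one hx0.le hx1).mul_left x
    have heq : ∀ n : ℕ, x ^ (-(n + 1) : ℤ).natAbs = x * x ^ n := by
      intro n
      have : (-(n+1) : ℤ).natAbs = n + 1 := by
        rw [Int.natAbs_neg]
        exact_mod_cast Int.natAbs_natCast (n+1)
      rw [this, pow_succ]; ring
    exact h.congr_fun fun n => (heq n)
  have hsum : HasSum (fun n : ℤ => x ^ n.natAbs) ((1 - x)⁻¹ + x * (1 - x)⁻¹) :=
    HasSum.of_nat_of_neg_add_one hnat hneg
  have hsum' : HasSum (fun n : ℤ => Real.exp (-(ϱ * |(n : ℝ)|))) ((1 - x)⁻¹ + x * (1 - x)⁻¹) := by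
    refine hsum.congr_fun fun n => (hfx n)
  refine ⟨hsum'.summable, ?_⟩
  rw [hsum'.tsum_eq]
  have hub : 1 - x > 0 := by linarith
  have hkey : ϱ / Real.exp 1 ≤ 1 - x := one_sub_exp_neg_ge ϱ h0 h1
  have hpos : 0 < ϱ / Real.exp 1 := div_pos h0 (Real.exp_pos 1)
  have hinv : (1 - x)⁻¹ ≤ Real.exp 1 / ϱ := by
    rw [← one_div, div_le_div_iff₀ hub h0]
    have : (ϱ / Real.exp 1) * Real.exp 1 ≤ (1 - x) * Real.exp 1 :=
      mul_le_mul_of_nonneg_right hkey (Real.exp_pos 1).le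
    have hE : (ϱ / Real.exp 1) * Real.exp 1 = ϱ := by
      field_simp
    nlinarith
  have h2 : (1 - x)⁻¹ + x * (1 - x)⁻¹ ≤ 2 * (1 - x)⁻¹ := by
    have hinvpos : 0 < (1 - x)⁻¹ := inv_pos.mpr hub
    nlinarith
  have : 2 * (1 - x)⁻¹ ≤ 2 * (Real.exp 1 / ϱ) := by linarith
  have hfin : 2 * (Real.exp 1 / ϱ) ≤ (2 + 2 * Real.exp 1) / ϱ := by
    rw [mul_div_assoc' 2 (Real.exp 1) ϱ]
    gcongr
    nlinarith [Real.exp_pos 1]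
  linarith

/-- Fourier truncation estimate: if `|c_k| ≤ M e^{−|k|r}` then the tail
over `|k| > K`, weighted by `e^{|k|(r−2ϱ)}`, is at most `((2+2e)/ϱ)^d e^{−Kϱ} M`. -/
theorem fourier_truncation_estimate (d : ℕ) (hd : 1 ≤ d) (r ϱ K M : ℝ)
    (hr : 0 < r) (hϱ0 : 0 < ϱ) (hϱ1 : ϱ ≤ 1) (h2ϱ : 2 * ϱ < r)
    (hK : 0 ≤ K) (hM : 0 < M)
    (c : (Fin d → ℤ) → ℂ)
    (hc : ∀ k : Fin d → ℤ, ‖c k‖ ≤ M * Real.exp (-(l1norm k * r))) :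
    Summable (fun k : {k : Fin d → ℤ // K < l1norm k} =>
      ‖c k.1‖ * Real.exp (l1norm k.1 * (r - 2 * ϱ))) ∧
    (∑' k : {k : Fin d → ℤ // K < l1norm k},
      ‖c k.1‖ * Real.exp (l1norm k.1 * (r - 2 * ϱ)))
      ≤ ((2 + 2 * Real.exp 1) / ϱ) ^ d * Real.exp (-(K * ϱ)) * M := by
  set g : ℤ → ℝ := fun n => Real.exp (-(ϱ * |(n : ℝ)|)) with hgdef
  have hg0 : ∀ n, 0 ≤ g n := fun n => (Real.exp_pos _).le
  obtain ⟨hgs, hgt⟩ := int_exp_summable_tsum ϱ hϱ0 hϱ1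
  obtain ⟨hGs, hGt⟩ := pi_prod_summable_tsum (g := g) hgs hg0 d
  have hH : ∀ k : Fin d → ℤ, (∏ j, g (k j)) = Real.exp (-(ϱ * l1norm k)) := by
    intro k
    have h1 : -(ϱ * l1norm k) = ∑ j, -(ϱ * |(k j : ℝ)|) := by
      simp [l1norm, Finset.mul_sum]
    rw [h1, Real.exp_sum]
  have hterm : ∀ k : {k : Fin d → ℤ // K < l1norm k},
      ‖c k.1‖ * Real.exp (l1norm k.1 * (r - 2 * ϱ))
      ≤ M * Real.exp (-(K * ϱ)) * ∏ j, g (k.1 j) := by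
    rintro ⟨k, hk⟩
    have h1 : ‖c k‖ * Real.exp (l1norm k * (r - 2 * ϱ))
        ≤ (M * Real.exp (-(l1norm k * r))) * Real.exp (l1norm k * (r - 2 * ϱ)) :=
      mul_le_mul_of_nonneg_right (hc k) (Real.exp_pos _).le
    have h2 : (M * Real.exp (-(l1norm k * r))) * Real.exp (l1norm k * (r - 2 * ϱ))
        = M * (Real.exp (-(ϱ * l1norm k)) * Real.exp (-(ϱ * l1norm k))) := by
      rw [mul_assoc, ← Real.exp_add, ← Real.exp_add]
      congr 1
      exact congrArg Real.exp (by ring)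
    have h3 : Real.exp (-(ϱ * l1norm k)) ≤ Real.exp (-(K * ϱ)) := by
      apply Real.exp_le_exp.mpr
      nlinarith [le_of_lt hk]
    have h4 : 0 ≤ Real.exp (-(ϱ * l1norm k)) := (Real.exp_pos _).le
    have h5 : M * (Real.exp (-(ϱ * l1norm k)) * Real.exp (-(ϱ * l1norm k)))
        ≤ M * (Real.exp (-(K * ϱ)) * Real.exp (-(ϱ * l1norm k))) := by
      apply mul_le_mul_of_nonneg_left _ hM.le
      exact mul_le_mul_of_nonneg_right h3 h4
    calc ‖c k‖ * Real.exp (l1norm k * (r - 2 * ϱ))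
        ≤ M * (Real.exp (-(ϱ * l1norm k)) * Real.exp (-(ϱ * l1norm k))) := h2 ▸ h1
      _ ≤ M * (Real.exp (-(K * ϱ)) * Real.exp (-(ϱ * l1norm k))) := h5
      _ = M * Real.exp (-(K * ϱ)) * ∏ j, g (k j) := by
          rw [hH k]; ring
  have hmajS : Summable (fun k : {k : Fin d → ℤ // K < l1norm k} =>
      M * Real.exp (-(K * ϱ)) * ∏ j, g (k.1 j)) :=
    (hGs.subtype _).mul_left _
  have hS : Summable (fun k : {k : Fin d → ℤ // K < l1norm k} =>
      ‖c k.1‖ * Real.exp (l1norm k.1 * (r - 2 * ϱ))) :=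
    Summable.of_nonneg_of_le
      (fun k => mul_nonneg (norm_nonneg _) (Real.exp_pos _).le) hterm hmajS
  refine ⟨hS, ?_⟩
  have hsub : (∑' k : {k : Fin d → ℤ // K < l1norm k}, ∏ j, g (k.1 j))
      ≤ ∑' k : Fin d → ℤ, ∏ j, g (k j) :=
    Summable.tsum_le_tsum_of_inj Subtype.val Subtype.val_injective
      (fun cc _ => Finset.prod_nonneg fun j _ => hg0 _) (fun b => le_refl _)
      (hGs.subtype _) hGs
  have hSnn : 0 ≤ ∑' n : ℤ, g n := tsum_nonneg hg0
  have hpow : (∑' n : ℤ, g n) ^ d ≤ ((2 + 2 * Real.exp 1) / ϱ) ^ d :=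
    pow_le_pow_left₀ hSnn hgt d
  have hnn : (0:ℝ) ≤ M * Real.exp (-(K * ϱ)) :=
    mul_nonneg hM.le (Real.exp_pos _).le
  calc (∑' k : {k : Fin d → ℤ // K < l1norm k},
        ‖c k.1‖ * Real.exp (l1norm k.1 * (r - 2 * ϱ)))
      ≤ ∑' k : {k : Fin d → ℤ // K < l1norm k},
          M * Real.exp (-(K * ϱ)) * ∏ j, g (k.1 j) := Summable.tsum_le_tsum hterm hS hmajS
    _ = M * Real.exp (-(K * ϱ)) *
          ∑' k : {k : Fin d → ℤ // K < l1norm k}, ∏ j, g (k.1 j) := tsum_mul_left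
    _ ≤ M * Real.exp (-(K * ϱ)) * ∑' k : Fin d → ℤ, ∏ j, g (k j) :=
        mul_le_mul_of_nonneg_left hsub hnn
    _ = M * Real.exp (-(K * ϱ)) * (∑' n : ℤ, g n) ^ d := by rw [hGt]
    _ ≤ M * Real.exp (-(K * ϱ)) * ((2 + 2 * Real.exp 1) / ϱ) ^ d :=
        mul_le_mul_of_nonneg_left hpow hnn
    _ = ((2 + 2 * Real.exp 1) / ϱ) ^ d * Real.exp (-(K * ϱ)) * M := by ring
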